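/- The loss in distillable EPR pairs in the decohered mother protocol equals half the mutual-information drop: with the optimal measurement on B, (1/2)I(A:B) − (1/2)I(A':B') = (1/2)D(A:B), where D(A:B) is the quantum discord of ρ_AB. -/

import Mathlib

open scoped BigOperators Kronecker ComplexOrder
open Matrix

noncomputable section

/-- `-(x log₂ x)`, the summand of Shannon entropy. -/
def negxlog (x : ℝ) : ℝ := -(x * Real.logb 2 x)

/-- Von Neumann entropy (base-2) of a matrix, via the eigenvalues of a Hermitian matrix. -/
def vnEntropy {n : Type*} [Fintype n] [DecidableEq n] (ρ : Matrix n n ℂ) : ℝ :=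
  if h : ρ.IsHermitian then ∑ i, negxlog (h.eigenvalues i) else 0

/-- A density operator: positive semidefinite with unit trace. -/
def IsDensity {n : Type*} [Fintype n] [DecidableEq n] (ρ : Matrix n n ℂ) : Prop :=
  ρ.PosSemidef ∧ ρ.trace = 1

/-- Partial trace over the second factor. -/
def trB {α β : Type*} [Fintype β] (ρ : Matrix (α × β) (α × β) ℂ) : Matrix α α ℂ :=
  fun i j => ∑ k, ρ (i, k) (j, k)

/-- Partial trace over the first factor. -/
def trA {α β : Type*} [Fintype α] (ρ : Matrix (α × β) (α × β) ℂ) : Matrix β β ℂ :=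
  fun i j => ∑ k, ρ (k, i) (k, j)

/-- Partial trace over the third factor of a tripartite system `α × (β × γ)`. -/
def trC3 {α β γ : Type*} [Fintype γ] (ρ : Matrix (α × β × γ) (α × β × γ) ℂ) :
    Matrix (α × β) (α × β) ℂ :=
  fun i j => ∑ k, ρ (i.1, (i.2, k)) (j.1, (j.2, k))

/-- Partial trace over the second factor of a tripartite system `α × (β × γ)`. -/
def trB3 {α β γ : Type*} [Fintype β] (ρ : Matrix (α × β × γ) (α × β × γ) ℂ) :
    Matrix (α × γ) (α × γ) ℂ :=
  fun i j => ∑ k, ρ (i.1, (k, i.2)) (j.1, (k, j.2))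

/-- Partial trace over the first and third factors of a tripartite system `α × (β × γ)`. -/
def trAC3 {α β γ : Type*} [Fintype α] [Fintype γ] (ρ : Matrix (α × β × γ) (α × β × γ) ℂ) :
    Matrix β β ℂ :=
  fun i j => ∑ k : α, ∑ l : γ, ρ (k, (i, l)) (k, (j, l))

/-- A family of vectors is orthonormal. -/
def OrthonormalFam {ι β : Type*} [Fintype β] [DecidableEq ι] (e : ι → β → ℂ) : Prop :=
  ∀ i j, (∑ x, (starRingEnd ℂ) (e i x) * e j x) = if i = j then 1 else 0

/-- The rank-one operator `|v⟩⟨v|`. -/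
def projKet {β : Type*} (v : β → ℂ) : Matrix β β ℂ :=
  Matrix.vecMulVec v (star v)

/-- An orthonormal basis of `β`: an orthonormal family which is complete. -/
def IsONB {β : Type*} [Fintype β] [DecidableEq β] (e : β → β → ℂ) : Prop :=
  OrthonormalFam e ∧ (∑ j, projKet (e j)) = 1

/-- The operator `(I_A ⊗ ⟨v|) ρ (I_A ⊗ |w⟩)` on `A`. -/
def condOp2 {α β : Type*} [Fintype α] [Fintype β]
    (ρ : Matrix (α × β) (α × β) ℂ) (v w : β → ℂ) : Matrix α α ℂ :=
  fun i j => ∑ x, ∑ y, (starRingEnd ℂ) (v x) * ρ (i, x) (j, y) * w y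

/-- The unnormalized conditional operator `(I_A ⊗ ⟨v|) ρ (I_A ⊗ |v⟩)`. -/
def condOp {α β : Type*} [Fintype α] [Fintype β]
    (ρ : Matrix (α × β) (α × β) ℂ) (v : β → ℂ) : Matrix α α ℂ :=
  condOp2 ρ v v

/-- Outcome probability `p = Tr(ρ (I ⊗ |v⟩⟨v|))`. -/
def prob {α β : Type*} [Fintype α] [Fintype β]
    (ρ : Matrix (α × β) (α × β) ℂ) (v : β → ℂ) : ℝ :=
  (Matrix.trace (condOp ρ v)).re

/-- Normalized conditional state `ρ_{A|v}`. -/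
def condState {α β : Type*} [Fintype α] [Fintype β]
    (ρ : Matrix (α × β) (α × β) ℂ) (v : β → ℂ) : Matrix α α ℂ :=
  (prob ρ v)⁻¹ • condOp ρ v

/-- Measured (average) conditional entropy `Σ_i p_i S(ρ_{A|i})` for rank-one elements `|v i⟩⟨v i|`. -/
def measCondEnt {α β ι : Type*} [Fintype α] [Fintype β] [DecidableEq α]
    [Fintype ι] (ρ : Matrix (α × β) (α × β) ℂ) (v : ι → β → ℂ) : ℝ :=
  ∑ i, prob ρ (v i) * vnEntropy (condState ρ (v i))

/-- Quantum conditional entropy `S(A|B) = S(ρ_AB) - S(ρ_B)`. -/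
def condEnt {α β : Type*} [Fintype α] [Fintype β] [DecidableEq α] [DecidableEq β]
    (ρ : Matrix (α × β) (α × β) ℂ) : ℝ :=
  vnEntropy ρ - vnEntropy (trA ρ)

/-- Quantum mutual information `I(A:B) = S(ρ_A) + S(ρ_B) - S(ρ_AB)`. -/
def mutualInfo {α β : Type*} [Fintype α] [Fintype β] [DecidableEq α] [DecidableEq β]
    (ρ : Matrix (α × β) (α × β) ℂ) : ℝ :=
  vnEntropy (trB ρ) + vnEntropy (trA ρ) - vnEntropy ρ

/-- Quantum discord `D(A:B) = inf over rank-1 POVMs of S̃(A|B) - S(A|B)`. -/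
def discord (α β : Type*) [Fintype α] [Fintype β] [DecidableEq α] [DecidableEq β]
    (ρ : Matrix (α × β) (α × β) ℂ) : ℝ :=
  sInf { r : ℝ | ∃ (n : ℕ) (v : Fin n → β → ℂ),
      (∑ i, projKet (v i)) = 1 ∧ r = measCondEnt ρ v } - condEnt ρ

/-- A POVM: positive semidefinite elements summing to the identity. -/
def IsPOVM {β ι : Type*} [Fintype β] [DecidableEq β] [Fintype ι]
    (M : ι → Matrix β β ℂ) : Prop :=
  (∀ i, (M i).PosSemidef) ∧ (∑ i, M i) = 1

/-- Outcome probability for a general POVM element. -/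
def povmProb {α β : Type*} [Fintype α] [Fintype β] [DecidableEq α] [DecidableEq β]
    (ρ : Matrix (α × β) (α × β) ℂ) (M : Matrix β β ℂ) : ℝ :=
  (Matrix.trace (trB (ρ * ((1 : Matrix α α ℂ) ⊗ₖ M)))).re

/-- Normalized conditional state for a general POVM element. -/
def povmCondState {α β : Type*} [Fintype α] [Fintype β] [DecidableEq α] [DecidableEq β]
    (ρ : Matrix (α × β) (α × β) ℂ) (M : Matrix β β ℂ) : Matrix α α ℂ :=
  (povmProb ρ M)⁻¹ • trB (ρ * ((1 : Matrix α α ℂ) ⊗ₖ M))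

/-- Measured conditional entropy for a general POVM. -/
def povmMCE {α β ι : Type*} [Fintype α] [Fintype β] [DecidableEq α] [DecidableEq β]
    [Fintype ι] (ρ : Matrix (α × β) (α × β) ℂ) (M : ι → Matrix β β ℂ) : ℝ :=
  ∑ i, povmProb ρ (M i) * vnEntropy (povmCondState ρ (M i))

end

/- ---------------- Auxiliary machinery ---------------- -/

noncomputable section MPAux

open Polynomial

set_option linter.unusedSectionVars false

/-- Entropy-type sum over the roots of the characteristic polynomial. -/
def entSum {n : Type*} [Fintype n] [DecidableEq n] (M : Matrix n n ℂ) : ℝ :=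
  ((M.charpoly.roots).map (fun z => negxlog z.re)).sum

section Core

variable {n : Type*} [Fintype n] [DecidableEq n]

lemma charpoly_unit_conj (U V A : Matrix n n ℂ) (h : U * V = 1) :
    (U * A * V).charpoly = A.charpoly := by
  have h2 : V * U = 1 := mul_eq_one_comm.mp h
  have hmap : ∀ (M N : Matrix n n ℂ), (M * N).map (C : ℂ →+* ℂ[X]) =
      M.map C * N.map C := fun M N => Matrix.map_mul
  have key : charmatrix (U * A * V) = U.map (C : ℂ →+* ℂ[X]) * charmatrix A * V.map C := by
    rw [charmatrix, charmatrix]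
    have h1' : U.map (C : ℂ →+* ℂ[X]) * V.map C = 1 := by
      rw [← hmap, h]; simp
    rw [mul_sub, sub_mul]
    congr 1
    · rw [Matrix.scalar_apply]
      have comm : U.map (C : ℂ →+* ℂ[X]) * Matrix.diagonal (fun _ => (X : ℂ[X]))
          = Matrix.diagonal (fun _ => (X : ℂ[X])) * U.map C := by
        refine Matrix.ext fun i j => ?_
        rw [Matrix.mul_diagonal, Matrix.diagonal_mul]
        exact mul_comm (U.map (C : ℂ →+* ℂ[X]) i j) X
      rw [comm, mul_assoc, h1', mul_one]
    · simp only [RingHom.mapMatrix_apply]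
      rw [hmap (U*A) V, hmap U A]
  rw [Matrix.charpoly, Matrix.charpoly, key, det_mul, det_mul, mul_comm,
    ← mul_assoc, ← det_mul]
  rw [← Matrix.map_mul (f := (C : ℂ →+* ℂ[X]))]
  rw [h2]
  simp

lemma charpoly_diagonal_roots (v : n → ℂ) :
    (Matrix.diagonal v).charpoly.roots = Finset.univ.val.map v := by
  have : charmatrix (Matrix.diagonal v) = Matrix.diagonal (fun i => (X : ℂ[X]) - C (v i)) := by
    rw [charmatrix, Matrix.scalar_apply]
    simp only [RingHom.mapMatrix_apply]
    rw [Matrix.diagonal_map (by simp)]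
    rw [Matrix.diagonal_sub]
  rw [Matrix.charpoly, this, det_diagonal]
  have : ∏ i, ((X : ℂ[X]) - C (v i))
      = ((Finset.univ.val.map v).map fun a => (X : ℂ[X]) - C a).prod := by
    rw [Multiset.map_map]
    rfl
  rw [this, roots_multiset_prod_X_sub_C]

lemma entSum_conj_diag (U : Matrix n n ℂ) (hU : U * star U = 1) (v : n → ℂ) :
    entSum (U * Matrix.diagonal v * star U) = ∑ i, negxlog (v i).re := by
  rw [entSum, charpoly_unit_conj U (star U) _ hU, charpoly_diagonal_roots,
    Multiset.map_map]
  rw [Finset.sum_eq_multiset_sum]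
  rfl

lemma vnEntropy_eq_entSum {M : Matrix n n ℂ} (h : M.IsHermitian) :
    vnEntropy M = entSum M := by
  rw [vnEntropy, dif_pos h]
  conv_rhs => rw [h.spectral_theorem]
  simp only [Unitary.conjStarAlgAut_apply, Unitary.coe_star]
  rw [entSum_conj_diag _ (Matrix.mem_unitaryGroup_iff.mp (h.eigenvectorUnitary).2)]
  simp [Function.comp]

lemma entSum_blockDiagonal {ι : Type*} [Fintype ι] [DecidableEq ι]
    (f : ι → Matrix n n ℂ) :
    entSum (Matrix.blockDiagonal f) = ∑ i, entSum (f i) := by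
  have hch : (Matrix.blockDiagonal f).charpoly = ∏ i, (f i).charpoly := by
    classical
    have key : charmatrix (Matrix.blockDiagonal f)
        = Matrix.blockDiagonal (fun i => charmatrix (f i)) := by
      rw [charmatrix, Matrix.scalar_apply]
      simp only [RingHom.mapMatrix_apply]
      rw [Matrix.blockDiagonal_map f _ (map_zero C),
        show (Matrix.diagonal (fun _ => (X : ℂ[X])) : Matrix (n × ι) (n × ι) ℂ[X])
          = Matrix.blockDiagonal (fun _ : ι => Matrix.diagonal fun _ : n => (X : ℂ[X]))
          from (Matrix.blockDiagonal_diagonal fun _ _ => X).symm,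
        ← Matrix.blockDiagonal_sub]
      congr 1
    rw [Matrix.charpoly, key, Matrix.det_blockDiagonal]
    rfl
  have hne : ∀ i ∈ Finset.univ, (f i).charpoly ≠ 0 := fun i _ => (f i).charpoly_monic.ne_zero
  rw [entSum, hch, Polynomial.roots_prod _ _ (Finset.prod_ne_zero_iff.mpr hne),
    Multiset.map_bind, Multiset.sum_bind]
  rfl

lemma trace_eq_sum_eigenvalues' {M : Matrix n n ℂ} (h : M.IsHermitian) :
    M.trace = ∑ i, (h.eigenvalues i : ℂ) := by
  conv_lhs => rw [h.spectral_theorem]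
  simp only [Unitary.conjStarAlgAut_apply, Unitary.coe_star]
  rw [Matrix.trace_mul_cycle,
    Matrix.mem_unitaryGroup_iff'.mp (h.eigenvectorUnitary).2, Matrix.one_mul,
    Matrix.trace_diagonal]
  rfl

lemma negxlog_zero : negxlog 0 = 0 := by simp [negxlog]

lemma negxlog_mul (a b : ℝ) : negxlog (a * b) = a * negxlog b + b * negxlog a := by
  rcases eq_or_ne a 0 with rfl | ha
  · simp [negxlog]
  rcases eq_or_ne b 0 with rfl | hb
  · simp [negxlog]
  rw [negxlog, negxlog, negxlog, Real.logb, Real.logb, Real.logb,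
    Real.log_mul ha hb]
  ring

lemma entSum_smul_psd {σ : Matrix n n ℂ} (hσ : σ.PosSemidef) (p : ℝ) :
    entSum ((p : ℂ) • σ) = p * vnEntropy σ + negxlog p * σ.trace.re := by
  have h := hσ.isHermitian
  have hsmul : (p : ℂ) • σ = (h.eigenvectorUnitary : Matrix n n ℂ)
      * Matrix.diagonal (fun i => ((p * h.eigenvalues i : ℝ) : ℂ))
      * star (h.eigenvectorUnitary : Matrix n n ℂ) := by
    conv_lhs => rw [h.spectral_theorem]
    simp only [Unitary.conjStarAlgAut_apply, Unitary.coe_star]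
    rw [← smul_mul_assoc, ← mul_smul_comm]
    congr 2
    refine Matrix.ext fun i j => ?_
    rcases eq_or_ne i j with rfl | hij
    · simp [Matrix.diagonal_apply_eq, Function.comp, Matrix.smul_apply, smul_eq_mul]
    · simp [Matrix.diagonal_apply_ne _ hij, hij, Matrix.smul_apply]
  rw [hsmul, entSum_conj_diag _ (Matrix.mem_unitaryGroup_iff.mp (h.eigenvectorUnitary).2)]
  have htr : σ.trace.re = ∑ i, h.eigenvalues i := by
    rw [trace_eq_sum_eigenvalues' h]
    simp
  rw [vnEntropy, dif_pos h, htr]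
  rw [Finset.mul_sum, Finset.mul_sum, ← Finset.sum_add_distrib]
  refine Finset.sum_congr rfl fun i _ => ?_
  rw [Complex.ofReal_re, negxlog_mul]
  ring

lemma posSemidef_trace_re_nonneg {M : Matrix n n ℂ} (hM : M.PosSemidef) :
    0 ≤ M.trace.re := by
  rw [trace_eq_sum_eigenvalues' hM.isHermitian, Complex.re_sum]
  exact Finset.sum_nonneg fun i _ => by
    rw [Complex.ofReal_re]; exact hM.eigenvalues_nonneg i

lemma psd_trace_ofReal {M : Matrix n n ℂ} (hM : M.PosSemidef) :
    M.trace = ((M.trace.re : ℝ) : ℂ) := by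
  have : M.trace = ((∑ i, hM.isHermitian.eigenvalues i : ℝ) : ℂ) := by
    rw [trace_eq_sum_eigenvalues' hM.isHermitian]; push_cast; ring
  rw [this, Complex.ofReal_re]

lemma psd_eq_zero_of_trace {M : Matrix n n ℂ} (hM : M.PosSemidef)
    (h : M.trace.re = 0) : M = 0 := by
  have h0 := hM.isHermitian
  have hsum : ∑ i, h0.eigenvalues i = 0 := by
    have := trace_eq_sum_eigenvalues' h0
    rw [this] at h
    rw [← h, Complex.re_sum]
    simp
  have he : ∀ i ∈ Finset.univ, h0.eigenvalues i = 0 :=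
    (Finset.sum_eq_zero_iff_of_nonneg fun i _ => hM.eigenvalues_nonneg i).mp hsum
  have hd : Matrix.diagonal (RCLike.ofReal ∘ h0.eigenvalues) = (0 : Matrix n n ℂ) := by
    rw [show RCLike.ofReal ∘ h0.eigenvalues = fun _ : n => (0 : ℂ) from
      funext fun i => by simp [Function.comp, he i (Finset.mem_univ i)]]
    exact Matrix.diagonal_zero
  conv_lhs => rw [h0.spectral_theorem]
  simp only [Unitary.conjStarAlgAut_apply, Unitary.coe_star]
  rw [hd, Matrix.mul_zero, Matrix.zero_mul]

lemma psd_smul_real {M : Matrix n n ℂ} (hM : M.PosSemidef) {r : ℝ} (hr : 0 ≤ r) :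
    ((r : ℂ) • M).PosSemidef := by
  constructor
  · rw [Matrix.IsHermitian, Matrix.conjTranspose_smul, hM.isHermitian.eq]
    congr 1
    simp
  · intro x
    have h1 : (0 : ℂ) ≤ (r : ℂ) := by
      rw [Complex.le_def]
      simp [hr]
    exact (hM.smul h1).2 x

lemma real_smul_matrix (p : ℝ) (M : Matrix n n ℂ) : p • M = (p : ℂ) • M := by
  refine Matrix.ext fun i j => ?_
  simp [Matrix.smul_apply, Complex.real_smul]

lemma vnEntropy_nonneg {M : Matrix n n ℂ} (hM : M.PosSemidef) (htr : M.trace.re ≤ 1) :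
    0 ≤ vnEntropy M := by
  rw [vnEntropy, dif_pos hM.isHermitian]
  have hsum : ∑ i, hM.isHermitian.eigenvalues i = M.trace.re := by
    rw [trace_eq_sum_eigenvalues' hM.isHermitian, Complex.re_sum]
    simp
  refine Finset.sum_nonneg fun i _ => ?_
  have h0 : 0 ≤ hM.isHermitian.eigenvalues i := hM.eigenvalues_nonneg i
  have h1 : hM.isHermitian.eigenvalues i ≤ 1 := by
    calc hM.isHermitian.eigenvalues i
        ≤ ∑ j, hM.isHermitian.eigenvalues j :=
          Finset.single_le_sum (fun j _ => hM.eigenvalues_nonneg j) (Finset.mem_univ i)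
    _ = M.trace.re := hsum
    _ ≤ 1 := htr
  rw [negxlog, neg_nonneg]
  exact mul_nonpos_of_nonneg_of_nonpos h0
    (Real.logb_nonpos (by norm_num) h0 h1)

lemma vnEntropy_diagonal_real (d : n → ℝ) :
    vnEntropy (Matrix.diagonal (fun i => ((d i : ℝ) : ℂ))) = ∑ i, negxlog (d i) := by
  have hherm : (Matrix.diagonal (fun i => ((d i : ℝ) : ℂ))).IsHermitian := by
    rw [Matrix.IsHermitian, Matrix.diagonal_conjTranspose,
      show (star (fun i => ((d i : ℝ) : ℂ))) = fun i => ((d i : ℝ) : ℂ) from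
        funext fun i => by simp]
  rw [vnEntropy_eq_entSum hherm,
    show Matrix.diagonal (fun i => ((d i : ℝ) : ℂ))
      = 1 * Matrix.diagonal (fun i => ((d i : ℝ) : ℂ)) * star (1 : Matrix n n ℂ) by simp,
    entSum_conj_diag 1 (by simp)]
  simp

end Core

section App

variable {α β : Type*} [Fintype α] [Fintype β] [DecidableEq α] [DecidableEq β]

/-- The isometry `|w⟩ ↦ |w⟩ ⊗ |v⟩`. -/
def liftB (α : Type*) [DecidableEq α] {β : Type*} [Fintype β] (v : β → ℂ) : Matrix (α × β) α ℂ :=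
  fun r c => if r.1 = c then v r.2 else 0

lemma condOp_eq (ρ : Matrix (α × β) (α × β) ℂ) (v : β → ℂ) :
    condOp ρ v = (liftB α v)ᴴ * ρ * (liftB α v) := by
  classical
  refine Matrix.ext fun a b => ?_
  simp only [condOp, condOp2, Matrix.mul_apply, Matrix.conjTranspose_apply, liftB,
    Fintype.sum_prod_type, apply_ite (star : ℂ → ℂ), star_zero, ite_mul, mul_ite,
    zero_mul, mul_zero, Finset.sum_ite_irrel, Finset.sum_const_zero,
    Finset.sum_ite_eq, Finset.sum_ite_eq', Finset.mem_univ, if_true]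
  rw [Finset.sum_comm]
  refine Finset.sum_congr rfl fun x _ => ?_
  rw [Finset.sum_mul]
  refine Finset.sum_congr rfl fun y _ => ?_
  rw [show star (v y) = (starRingEnd ℂ) (v y) from rfl]

lemma condOp_psd {ρ : Matrix (α × β) (α × β) ℂ} (hρ : ρ.PosSemidef) (v : β → ℂ) :
    (condOp ρ v).PosSemidef := by
  rw [condOp_eq]
  exact hρ.conjTranspose_mul_mul_same _

lemma prob_nonneg {ρ : Matrix (α × β) (α × β) ℂ} (hρ : ρ.PosSemidef) (v : β → ℂ) :
    0 ≤ prob ρ v :=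
  posSemidef_trace_re_nonneg (condOp_psd hρ v)

lemma condOp_trace {ρ : Matrix (α × β) (α × β) ℂ} (hρ : ρ.PosSemidef) (v : β → ℂ) :
    (condOp ρ v).trace = ((prob ρ v : ℝ) : ℂ) :=
  psd_trace_ofReal (condOp_psd hρ v)

lemma condOp_smul {ρ : Matrix (α × β) (α × β) ℂ} (hρ : ρ.PosSemidef) (v : β → ℂ) :
    ((prob ρ v : ℝ) : ℂ) • condState ρ v = condOp ρ v := by
  rw [condState, real_smul_matrix, smul_smul]
  rcases eq_or_ne (prob ρ v) 0 with h | h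
  · rw [h]
    simp only [Complex.ofReal_zero, zero_mul, zero_smul]
    exact (psd_eq_zero_of_trace (condOp_psd hρ v) h).symm
  · rw [← Complex.ofReal_mul, mul_inv_cancel₀ h]
    simp

lemma condState_psd {ρ : Matrix (α × β) (α × β) ℂ} (hρ : ρ.PosSemidef) (v : β → ℂ) :
    (condState ρ v).PosSemidef := by
  rw [condState, real_smul_matrix]
  exact psd_smul_real (condOp_psd hρ v) (inv_nonneg.mpr (prob_nonneg hρ v))

lemma condState_trace_re {ρ : Matrix (α × β) (α × β) ℂ} (hρ : ρ.PosSemidef) (v : β → ℂ)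
    (h : prob ρ v ≠ 0) : (condState ρ v).trace.re = 1 := by
  rw [condState, real_smul_matrix, Matrix.trace_smul, smul_eq_mul, condOp_trace hρ v,
    ← Complex.ofReal_mul, Complex.ofReal_re, inv_mul_cancel₀ h]

lemma condState_trace_re_le_one {ρ : Matrix (α × β) (α × β) ℂ} (hρ : ρ.PosSemidef)
    (v : β → ℂ) : (condState ρ v).trace.re ≤ 1 := by
  rcases eq_or_ne (prob ρ v) 0 with h | h
  · rw [condState, psd_eq_zero_of_trace (condOp_psd hρ v) h]
    simp
  · rw [condState_trace_re hρ v h]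

lemma measCondEnt_nonneg {ρ : Matrix (α × β) (α × β) ℂ} (hρ : ρ.PosSemidef)
    {m : ℕ} (v : Fin m → β → ℂ) : 0 ≤ measCondEnt ρ v :=
  Finset.sum_nonneg fun i _ => mul_nonneg (prob_nonneg hρ (v i))
    (vnEntropy_nonneg (condState_psd hρ (v i)) (condState_trace_re_le_one hρ (v i)))

lemma mutualInfo_cq {ρ : Matrix (α × β) (α × β) ℂ} (hρ : ρ.PosSemidef)
    {m : ℕ} (v : Fin m → β → ℂ) (hv : (∑ i, projKet (v i)) = 1) :
    mutualInfo (∑ i, prob ρ (v i) •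
        (condState ρ (v i) ⊗ₖ (Matrix.single i i 1 : Matrix (Fin m) (Fin m) ℂ)))
      = vnEntropy (trB ρ) - measCondEnt ρ v := by
  classical
  set ρ' := ∑ i, prob ρ (v i) •
      (condState ρ (v i) ⊗ₖ (Matrix.single i i 1 : Matrix (Fin m) (Fin m) ℂ))
    with hρ'def
  have h1 : ρ' = Matrix.blockDiagonal (fun i => condOp ρ (v i)) := by
    refine Matrix.ext fun r s => ?_
    obtain ⟨a, k⟩ := r
    obtain ⟨b, l⟩ := s
    rw [hρ'def, Matrix.sum_apply]
    have hterm : ∀ i : Fin m, (prob ρ (v i) •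
        (condState ρ (v i) ⊗ₖ (Matrix.single i i 1 : Matrix (Fin m) (Fin m) ℂ)))
          (a, k) (b, l)
        = if i = k ∧ i = l then ((prob ρ (v i) : ℝ) : ℂ) * condState ρ (v i) a b else 0 := by
      intro i
      rw [Matrix.smul_apply, Matrix.kroneckerMap_apply, Matrix.single]
      by_cases h : i = k ∧ i = l
      · simp [h, Complex.real_smul, mul_comm]
      · simp [h]
    rw [Finset.sum_congr rfl fun i _ => hterm i, Matrix.blockDiagonal_apply]
    by_cases hkl : k = l
    · subst hkl
      rw [if_pos rfl]
      simp only [and_self]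
      rw [Finset.sum_ite_eq' Finset.univ k
        (fun i => ((prob ρ (v i) : ℝ) : ℂ) * condState ρ (v i) a b),
        if_pos (Finset.mem_univ k), ← condOp_smul hρ (v k), Matrix.smul_apply, smul_eq_mul]
    · rw [if_neg hkl]
      refine Finset.sum_eq_zero fun i _ => if_neg ?_
      rintro ⟨rfl, rfl⟩
      exact hkl rfl
  have hpsd_i : ∀ i : Fin m, (condOp ρ (v i)).PosSemidef := fun i => condOp_psd hρ (v i)
  have h2 : ρ'.IsHermitian := by
    rw [h1]
    show (Matrix.blockDiagonal fun i => condOp ρ (v i))ᴴ = _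
    rw [Matrix.blockDiagonal_conjTranspose,
      show (fun i => (condOp ρ (v i))ᴴ) = fun i => condOp ρ (v i) from
        funext fun i => (hpsd_i i).isHermitian]
  have hent : vnEntropy ρ' = measCondEnt ρ v + ∑ i, negxlog (prob ρ (v i)) := by
    rw [vnEntropy_eq_entSum h2]
    conv_lhs => rw [h1]
    rw [entSum_blockDiagonal, measCondEnt, ← Finset.sum_add_distrib]
    refine Finset.sum_congr rfl fun i _ => ?_
    rw [← condOp_smul hρ (v i), entSum_smul_psd (condState_psd hρ (v i))]
    rcases eq_or_ne (prob ρ (v i)) 0 with h | h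
    · rw [h, negxlog_zero]
      ring
    · rw [condState_trace_re hρ (v i) h]
      ring
  have hδ : ∀ y x : β, (∑ k, v k y * (starRingEnd ℂ) (v k x)) = if y = x then 1 else 0 := by
    intro y x
    have h := congrArg (fun M : Matrix β β ℂ => M y x) hv
    simpa [Matrix.sum_apply, projKet, Matrix.vecMulVec_apply, Matrix.one_apply] using h
  have h4 : trB ρ' = trB ρ := by
    rw [h1]
    refine Matrix.ext fun a b => ?_
    show ∑ k, Matrix.blockDiagonal (fun i => condOp ρ (v i)) (a, k) (b, k)
      = ∑ x, ρ (a, x) (b, x)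
    simp only [Matrix.blockDiagonal_apply, if_pos rfl]
    calc ∑ k, condOp ρ (v k) a b
        = ∑ k, ∑ x, ∑ y, (starRingEnd ℂ) (v k x) * ρ (a, x) (b, y) * v k y := rfl
      _ = ∑ x, ∑ y, ρ (a, x) (b, y) * ∑ k, v k y * (starRingEnd ℂ) (v k x) := by
          rw [Finset.sum_comm]
          refine Finset.sum_congr rfl fun x _ => ?_
          rw [Finset.sum_comm]
          refine Finset.sum_congr rfl fun y _ => ?_
          rw [Finset.mul_sum]
          refine Finset.sum_congr rfl fun k _ => by ring
      _ = ∑ x, ρ (a, x) (b, x) := by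
          refine Finset.sum_congr rfl fun x _ => ?_
          simp only [hδ, mul_ite, mul_one, mul_zero]
          rw [Finset.sum_ite_eq' Finset.univ x (fun y => ρ (a, x) (b, y)),
            if_pos (Finset.mem_univ x)]
  have h5 : trA ρ' = Matrix.diagonal (fun i => ((prob ρ (v i) : ℝ) : ℂ)) := by
    rw [h1]
    refine Matrix.ext fun k l => ?_
    show ∑ a, Matrix.blockDiagonal (fun i => condOp ρ (v i)) (a, k) (a, l)
      = Matrix.diagonal (fun i => ((prob ρ (v i) : ℝ) : ℂ)) k l
    simp only [Matrix.blockDiagonal_apply, Matrix.diagonal_apply]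
    by_cases hkl : k = l
    · subst hkl
      simp only [if_pos rfl]
      have := condOp_trace hρ (v k)
      rw [Matrix.trace] at this
      simpa [Matrix.diag] using this
    · simp [hkl]
  rw [mutualInfo, h4, h5, hent, vnEntropy_diagonal_real]
  ring

end App

end MPAux

/-- the loss in distillable EPR pairs in the decohered mother protocol equals
half the discord: `(1/2) I(A:B) - (1/2) sup I(A':B') = (1/2) D(A:B)`. -/
theorem mother_protocol_loss_eq_half_discord
    {α β : Type*} [Fintype α] [Fintype β] [DecidableEq α] [DecidableEq β]
    (ρ : Matrix (α × β) (α × β) ℂ) (hρ : IsDensity ρ) :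
    (1 / 2) * mutualInfo ρ -
      (1 / 2) * sSup { r : ℝ | ∃ (n : ℕ) (v : Fin n → β → ℂ),
        (∑ i, projKet (v i)) = 1 ∧
        r = mutualInfo (∑ i, prob ρ (v i) •
              (condState ρ (v i) ⊗ₖ (Matrix.single i i 1 : Matrix (Fin n) (Fin n) ℂ))) }
    = (1 / 2) * discord α β ρ := by
  classical
  have hpsd := hρ.1
  set c := vnEntropy (trB ρ) with hc
  set T := { r : ℝ | ∃ (n : ℕ) (v : Fin n → β → ℂ),
      (∑ i, projKet (v i)) = 1 ∧ r = measCondEnt ρ v } with hT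
  have hSset : { r : ℝ | ∃ (n : ℕ) (v : Fin n → β → ℂ),
        (∑ i, projKet (v i)) = 1 ∧
        r = mutualInfo (∑ i, prob ρ (v i) •
              (condState ρ (v i) ⊗ₖ (Matrix.single i i 1 : Matrix (Fin n) (Fin n) ℂ))) }
      = (fun r => c - r) '' T := by
    ext r
    constructor
    · rintro ⟨n, v, hv, rfl⟩
      exact ⟨measCondEnt ρ v, ⟨n, v, hv, rfl⟩, (mutualInfo_cq hpsd v hv).symm⟩
    · rintro ⟨t, ⟨n, v, hv, rfl⟩, rfl⟩
      exact ⟨n, v, hv, (mutualInfo_cq hpsd v hv).symm⟩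
  have hβ : Nonempty β := by
    by_contra h
    rw [not_nonempty_iff] at h
    have h0 : ρ.trace = 0 := by
      rw [Matrix.trace]
      exact Finset.sum_of_isEmpty _
    rw [hρ.2] at h0
    exact one_ne_zero h0
  have hTne : T.Nonempty := by
    obtain e := Fintype.equivFin β
    refine ⟨measCondEnt ρ (fun (i : Fin (Fintype.card β)) (x : β) =>
      if e x = i then 1 else 0), Fintype.card β, _, ?_, rfl⟩
    refine Matrix.ext fun x y => ?_
    rw [Matrix.sum_apply]
    have hterm : ∀ i : Fin (Fintype.card β),
        projKet (fun x : β => if e x = i then (1:ℂ) else 0) x y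
        = if e x = i then (if e y = i then (1:ℂ) else 0) else 0 := by
      intro i
      rw [projKet, Matrix.vecMulVec_apply]
      by_cases hx : e x = i <;> by_cases hy : e y = i <;>
        simp [hx, hy]
    rw [Finset.sum_congr rfl fun i _ => hterm i]
    rw [Finset.sum_ite_eq Finset.univ (e x)
      (fun i => if e y = i then (1:ℂ) else 0), if_pos (Finset.mem_univ _)]
    rw [Matrix.one_apply]
    by_cases hxy : x = y
    · subst hxy
      simp
    · rw [if_neg fun h => hxy (e.injective h.symm), if_neg hxy]
  have hTbdd : BddBelow T := by
    refine ⟨0, fun r hr => ?_⟩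
    obtain ⟨n, v, hv, rfl⟩ := hr
    exact measCondEnt_nonneg hpsd v
  have hsup : sSup ((fun r => c - r) '' T) = c - sInf T := by
    refine IsLUB.csSup_eq ?_ (hTne.image _)
    constructor
    · rintro x ⟨t, ht, rfl⟩
      have := csInf_le hTbdd ht
      simp only
      linarith
    · intro b hb
      have hcb : c - b ≤ sInf T := by
        refine le_csInf hTne fun t ht => ?_
        have := hb ⟨t, ht, rfl⟩
        simp only at this
        linarith
      linarith
  rw [hSset, hsup, discord, ← hT, mutualInfo, condEnt, ← hc]
  ring
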